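/- Let a, b and d be pairwise coprime odd integers with d > 1 (d positive), and let β ≥ 2 be an integer. Suppose there exists a positive integer k such that 2^β·d divides a^k + b^k. Then the multiplicative order of a·b^{-1} modulo 2^β equals 2, and the multiplicative order of a·b^{-1} modulo 2^β·d is exactly divisible by 2 (2 divides it but 4 does not). -/

import Mathlib

lemma aux_isUnit_of_isCoprime {n : ℕ} {b : ℤ} (h : IsCoprime b (n : ℤ)) :
    IsUnit ((b : ZMod n)) := by
  obtain ⟨u, v, huv⟩ := h
  apply IsUnit.of_mul_eq_one (u : ZMod n)
  have := congrArg (Int.cast : ℤ → ZMod n) huv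
  push_cast at this
  simpa [ZMod.natCast_self, mul_comm] using this

lemma aux_pow_eq_neg_one {n : ℕ} (a b : ℤ) (hbu : IsUnit ((b : ZMod n)))
    (k : ℕ) (h : (n : ℤ) ∣ a ^ k + b ^ k) :
    ((a : ZMod n) * (b : ZMod n)⁻¹) ^ k = -1 := by
  have h0 : (a : ZMod n) ^ k + (b : ZMod n) ^ k = 0 := by
    have := (ZMod.intCast_zmod_eq_zero_iff_dvd (a ^ k + b ^ k) n).mpr h
    push_cast at this
    exact this
  have hab : (a : ZMod n) ^ k = -((b : ZMod n) ^ k) := eq_neg_of_add_eq_zero_left h0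
  calc ((a : ZMod n) * (b : ZMod n)⁻¹) ^ k
      = (a : ZMod n) ^ k * ((b : ZMod n)⁻¹) ^ k := by rw [mul_pow]
    _ = -((b : ZMod n) ^ k * ((b : ZMod n)⁻¹) ^ k) := by rw [hab, neg_mul]
    _ = -(((b : ZMod n) * (b : ZMod n)⁻¹) ^ k) := by rw [mul_pow]
    _ = -1 := by rw [ZMod.mul_inv_of_unit _ hbu, one_pow]



/-- Let `a`, `b`, `d` be pairwise coprime odd integers with `d > 1`, and `β ≥ 2`.
If `2^β·d ∣ a^k + b^k` for some positive integer `k`, then the order of `a·b⁻¹`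
modulo `2^β` is `2`, and the order of `a·b⁻¹` modulo `2^β·d` is exactly divisible
by `2`. -/
theorem order_of_good_two_pow_mul
    (a b : ℤ) (d : ℕ) (ha : Odd a) (hb : Odd b) (hd : Odd (d : ℤ))
    (hab : IsCoprime a b) (had : IsCoprime a (d : ℤ)) (hbd : IsCoprime b (d : ℤ))
    (hd1 : 1 < d) (β : ℕ) (hβ : 2 ≤ β)
    (hgood : ∃ k : ℕ, 0 < k ∧ ((2 ^ β * d : ℕ) : ℤ) ∣ a ^ k + b ^ k) :
    orderOf ((a : ZMod (2 ^ β)) * (b : ZMod (2 ^ β))⁻¹) = 2 ∧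
      2 ∣ orderOf ((a : ZMod (2 ^ β * d)) * (b : ZMod (2 ^ β * d))⁻¹) ∧
        ¬ 4 ∣ orderOf ((a : ZMod (2 ^ β * d)) * (b : ZMod (2 ^ β * d))⁻¹) := by
  obtain ⟨k, hk, hdvd⟩ := hgood
  -- coprimality with 2
  have ha2 : IsCoprime a (2 : ℤ) := by
    obtain ⟨s, hs⟩ := ha
    exact ⟨1, -s, by linarith⟩
  have hb2 : IsCoprime b (2 : ℤ) := by
    obtain ⟨t, ht⟩ := hb
    exact ⟨1, -t, by linarith⟩
  -- divisibility facts
  have h4dvd : (4 : ℤ) ∣ a ^ k + b ^ k := by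
    refine dvd_trans ?_ hdvd
    have h1 : (4 : ℤ) ∣ (2 : ℤ) ^ β := by
      calc (4 : ℤ) = 2 ^ 2 := by norm_num
        _ ∣ 2 ^ β := pow_dvd_pow 2 hβ
    push_cast
    exact h1.mul_right _
  -- k is odd
  have hkodd : Odd k := by
    by_contra hke
    rw [Nat.not_odd_iff_even] at hke
    obtain ⟨m, hm⟩ := hke
    obtain ⟨s, hs⟩ := (ha.pow : Odd (a ^ m))
    obtain ⟨t, ht⟩ := (hb.pow : Odd (b ^ m))
    have hk2 : a ^ k + b ^ k = (a ^ m) ^ 2 + (b ^ m) ^ 2 := by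
      rw [hm, pow_add, pow_add]; ring
    rw [hk2, hs, ht] at h4dvd
    have hexp : (2 * s + 1) ^ 2 + (2 * t + 1) ^ 2
        = 4 * (s * s + s + t * t + t) + 2 := by ring
    rw [hexp] at h4dvd
    omega
  obtain ⟨j, hj⟩ := hkodd
  -----------------------------------------------------------------
  -- Part 1: modulus 2^β
  -----------------------------------------------------------------
  have hβ0 : 0 < β := by omega
  have hdvd1 : ((2 ^ β : ℕ) : ℤ) ∣ a ^ k + b ^ k := by
    refine dvd_trans ?_ hdvd
    exact_mod_cast Int.natCast_dvd_natCast.mpr ⟨d, rfl⟩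
  have hcb1 : IsCoprime b (((2 ^ β : ℕ)) : ℤ) := by
    push_cast; exact hb2.pow_right
  have hca1 : IsCoprime a (((2 ^ β : ℕ)) : ℤ) := by
    push_cast; exact ha2.pow_right
  have hbu1 : IsUnit ((b : ZMod (2 ^ β))) := aux_isUnit_of_isCoprime hcb1
  have hau1 : IsUnit ((a : ZMod (2 ^ β))) := aux_isUnit_of_isCoprime hca1
  set y : ZMod (2 ^ β) := (a : ZMod (2 ^ β)) * (b : ZMod (2 ^ β))⁻¹ with hy
  have hyk : y ^ k = -1 := aux_pow_eq_neg_one a b hbu1 k (by exact_mod_cast hdvd1)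
  haveI : NeZero (2 ^ β) := ⟨pow_ne_zero β two_ne_zero⟩
  haveI : Fact (2 < 2 ^ β) := ⟨by
    calc 2 < 2 ^ 2 := by norm_num
      _ ≤ 2 ^ β := Nat.pow_le_pow_right (by norm_num) hβ⟩
  have hne : (-1 : ZMod (2 ^ β)) ≠ 1 := ZMod.neg_one_ne_one
  have hyu : IsUnit y := by
    refine hau1.mul ?_
    exact IsUnit.of_mul_eq_one _ (by rw [mul_comm]; exact ZMod.mul_inv_of_unit _ hbu1)
  -- order divides 2k
  have hord2k : orderOf y ∣ 2 * k := by
    apply orderOf_dvd_of_pow_eq_one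
    rw [mul_comm 2 k, pow_mul, hyk, neg_one_sq]
  -- order divides 2^(β-1)
  have hordpow : orderOf y ∣ 2 ^ (β - 1) := by
    have h1 : orderOf y = orderOf hyu.unit := by
      rw [← orderOf_units, IsUnit.unit_spec]
    have h2 : orderOf hyu.unit ∣ Fintype.card (ZMod (2 ^ β))ˣ := orderOf_dvd_card
    rw [ZMod.card_units_eq_totient, Nat.totient_prime_pow Nat.prime_two hβ0] at h2
    simpa [h1] using h2
  have hyne1 : y ≠ 1 := by
    intro h
    rw [h, one_pow] at hyk
    exact hne hyk.symm
  have hord1 : orderOf y = 2 := by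
    obtain ⟨s, hsle, hords⟩ := (Nat.dvd_prime_pow Nat.prime_two).mp hordpow
    have hs1 : s ≤ 1 := by
      by_contra hs2
      have h4 : (4 : ℕ) ∣ 2 * k := by
        refine dvd_trans ?_ (hords ▸ hord2k)
        calc (4 : ℕ) = 2 ^ 2 := by norm_num
          _ ∣ 2 ^ s := pow_dvd_pow 2 (by omega)
      omega
    have hs0 : s ≠ 0 := by
      intro h
      rw [h, pow_zero] at hords
      exact hyne1 (orderOf_eq_one_iff.mp hords)
    have : s = 1 := by omega
    rw [hords, this, pow_one]
  -----------------------------------------------------------------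
  -- Part 2: modulus 2^β * d
  -----------------------------------------------------------------
  have hcb2 : IsCoprime b (((2 ^ β * d : ℕ)) : ℤ) := by
    push_cast; exact IsCoprime.mul_right hb2.pow_right hbd
  have hbu2 : IsUnit ((b : ZMod (2 ^ β * d))) := aux_isUnit_of_isCoprime hcb2
  set z : ZMod (2 ^ β * d) := (a : ZMod (2 ^ β * d)) * (b : ZMod (2 ^ β * d))⁻¹ with hz
  have hzk : z ^ k = -1 := aux_pow_eq_neg_one a b hbu2 k hdvd
  haveI : NeZero (2 ^ β * d) := ⟨by positivity⟩
  haveI : Fact (2 < 2 ^ β * d) := ⟨by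
    have h1 : 4 ≤ 2 ^ β := by
      calc (4:ℕ) = 2 ^ 2 := by norm_num
        _ ≤ 2 ^ β := Nat.pow_le_pow_right (by norm_num) hβ
    have : 0 < d := by omega
    calc 2 < 4 * 1 := by norm_num
      _ ≤ 2 ^ β * d := Nat.mul_le_mul h1 this⟩
  have hne2 : (-1 : ZMod (2 ^ β * d)) ≠ 1 := ZMod.neg_one_ne_one
  have hord2k' : orderOf z ∣ 2 * k := by
    apply orderOf_dvd_of_pow_eq_one
    rw [mul_comm 2 k, pow_mul, hzk, neg_one_sq]
  have h2dvd : 2 ∣ orderOf z := by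
    by_contra h2
    have hodd : Odd (orderOf z) := Nat.odd_iff.mpr (by omega)
    have hcop : Nat.Coprime (orderOf z) 2 :=
      ((Nat.Prime.coprime_iff_not_dvd Nat.prime_two).mpr h2).symm
    have : orderOf z ∣ k := hcop.dvd_of_dvd_mul_left hord2k'
    have : z ^ k = 1 := orderOf_dvd_iff_pow_eq_one.mp this
    rw [hzk] at this
    exact hne2 this
  have h4ndvd : ¬ 4 ∣ orderOf z := by
    intro h4
    have : (4 : ℕ) ∣ 2 * k := h4.trans hord2k'
    omega
  exact ⟨hord1, h2dvd, h4ndvd⟩
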